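/- Let J be a proper lsc convex function on ℝⁿ, A ∈ ℝ^{m×n}, b₀ ∈ ℝᵐ, x₀ a point with ‖Ax₀ - b‖ ≤ δ. Suppose there exists α > 0 such that ‖Ah‖ ≥ α‖h‖ for all h in the descent cone D_J(x₀). Then any solution x^δ of the problem min J(x) s.t. ‖Ax - b‖ ≤ δ satisfies ‖x^δ - x₀‖ ≤ 2δ/α. -/
import Mathlib


open scoped InnerProductSpace

/-- If `‖Ax₀ - b‖ ≤ δ` and `‖Ah‖ ≥ α‖h‖` for all `h` in the descent cone
`D_J(x₀)`, then any minimizer `x^δ` of `J` over `{x : ‖Ax - b‖ ≤ δ}` satisfies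
`‖x^δ - x₀‖ ≤ 2δ/α`. -/
theorem robust_recovery_bound_of_descent_cone_condition
    (n m : ℕ) (J : EuclideanSpace ℝ (Fin n) → EReal)
    (hproper_bot : ∀ x, ⊥ < J x) (hproper_top : ∃ x, J x < ⊤)
    (hconvex : ∀ x y, ∀ a b : ℝ, 0 ≤ a → 0 ≤ b → a + b = 1 →
      J (a • x + b • y) ≤ (a : EReal) * J x + (b : EReal) * J y)
    (hlsc : LowerSemicontinuous J)
    (A : EuclideanSpace ℝ (Fin n) →L[ℝ] EuclideanSpace ℝ (Fin m))
    (b : EuclideanSpace ℝ (Fin m)) (δ : ℝ)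
    (x₀ : EuclideanSpace ℝ (Fin n)) (hx₀ : ‖A x₀ - b‖ ≤ δ)
    (α : ℝ) (hα : 0 < α)
    (hcone : ∀ h ∈ {hh | ∃ l > (0 : ℝ), ∃ x, J x ≤ J x₀ ∧ hh = l • (x - x₀)},
      α * ‖h‖ ≤ ‖A h‖)
    (xδ : EuclideanSpace ℝ (Fin n)) (hfeas : ‖A xδ - b‖ ≤ δ)
    (hopt : ∀ x, ‖A x - b‖ ≤ δ → J xδ ≤ J x) :
    ‖xδ - x₀‖ ≤ 2 * δ / α := by
  have hmem : xδ - x₀ ∈ {hh | ∃ l > (0 : ℝ), ∃ x, J x ≤ J x₀ ∧ hh = l • (x - x₀)} :=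
    ⟨1, one_pos, xδ, hopt x₀ hx₀, (one_smul ℝ _).symm⟩
  have h1 := hcone _ hmem
  have h2 : ‖A (xδ - x₀)‖ ≤ 2 * δ := by
    have : A (xδ - x₀) = (A xδ - b) - (A x₀ - b) := by rw [map_sub]; abel
    rw [this]
    calc ‖(A xδ - b) - (A x₀ - b)‖ ≤ ‖A xδ - b‖ + ‖A x₀ - b‖ := norm_sub_le _ _
      _ ≤ 2 * δ := by linarith
  rw [le_div_iff₀ hα, mul_comm]
  linarith
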